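/- Let K, L be convex bodies in R^n contained in a ball of radius R and let 0 < ε < 1. If the surface tensors of K and L coincide for all ranks s with 0 ≤ s ≤ s_0, then d_D(S_{n-1}(K,·), S_{n-1}(L,·)) ≤ c(n, R, ε) s_0^{(ε−1)/2} for a constant c depending only on n, R and ε. -/

import Mathlib

set_option linter.unnecessarySimpa false
set_option maxHeartbeats 1000000


open MeasureTheory Metric Real Filter
open scoped InnerProductSpace ENNReal NNReal Topology

noncomputable section

abbrev En (n : ℕ) := EuclideanSpace ℝ (Fin n)

abbrev Sph (n : ℕ) : Set (En n) := Metric.sphere 0 1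

/-- `μ` is the surface area measure `S_{n-1}(K, ·)` of the convex body `K`. -/
def IsSurfaceAreaMeasure {n : ℕ} (K : Set (En n)) (μ : Measure (Sph n)) : Prop :=
  ((interior K).Nonempty ∧ ∀ ω : Set (Sph n), MeasurableSet ω →
      μ ω = μH[((n : ℝ) - 1)]
        {x ∈ frontier K | ∃ u ∈ ω, ∀ y ∈ K, ⟪y - x, (u : En n)⟫_ℝ ≤ 0})
  ∨ (interior K = ∅ ∧ ∃ u u' : Sph n, (u' : En n) = -(u : En n) ∧
      (∃ c : ℝ, ∀ x ∈ K, ⟪x, (u : En n)⟫_ℝ = c) ∧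
      μ = (μH[((n : ℝ) - 1)] K) • (Measure.dirac u + Measure.dirac u'))

/-- The moment of a Borel measure on the sphere corresponding to the
multi-index `i : Fin n → ℕ`. -/
def sphMoment {n : ℕ} (μ : Measure (Sph n)) (i : Fin n → ℕ) : ℝ :=
  ∫ u, ∏ j, ((u : En n) j) ^ (i j) ∂μ


/-! ### Auxiliary lemmas -/

lemma abs_coord_le {m : ℕ} (x : EuclideanSpace ℝ (Fin m)) (i : Fin m) : |x i| ≤ ‖x‖ := by
  rw [EuclideanSpace.norm_eq, ← Real.sqrt_sq_eq_abs]
  apply Real.sqrt_le_sqrt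
  have : ∀ j, (0:ℝ) ≤ ‖x j‖^2 := fun j => sq_nonneg _
  have h := Finset.single_le_sum (f := fun j => ‖x j‖^2) (fun j _ => this j) (Finset.mem_univ i)
  simpa [Real.norm_eq_abs, sq_abs] using h

/-- bound for H^m of euclidean closed ball of radius r in dimension m -/
lemma hm_ball_le (m : ℕ) (r : ℝ) (hr : 0 ≤ r) :
    μH[(m : ℝ)] (Metric.closedBall (0 : EuclideanSpace ℝ (Fin m)) r)
      ≤ (Real.toNNReal (Real.sqrt m) : ℝ≥0∞) ^ (m : ℝ) * ENNReal.ofReal ((2*r)^m) := by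
  classical
  set ψ : (Fin m → ℝ) → EuclideanSpace ℝ (Fin m) := fun x => (EuclideanSpace.equiv (Fin m) ℝ).symm x with hψ
  have hlip : LipschitzWith (Real.toNNReal (Real.sqrt m)) ψ := by
    apply LipschitzWith.of_dist_le_mul
    intro x y
    rw [EuclideanSpace.dist_eq]
    have h1 : ∀ i, dist (x i) (y i) ≤ dist x y := fun i => dist_le_pi_dist x y i
    have h2 : ∑ i, dist (x i) (y i)^2 ≤ (m : ℝ) * dist x y ^ 2 := by
      calc ∑ i, dist (x i) (y i)^2 ≤ ∑ _i : Fin m, dist x y ^ 2 := by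
            apply Finset.sum_le_sum; intro i _
            exact pow_le_pow_left₀ dist_nonneg (h1 i) 2
        _ = (m : ℝ) * dist x y ^ 2 := by simp [mul_comm]
    calc Real.sqrt (∑ i, dist (x i) (y i)^2) ≤ Real.sqrt ((m:ℝ) * dist x y ^ 2) :=
          Real.sqrt_le_sqrt h2
      _ = Real.sqrt m * dist x y := by
          rw [Real.sqrt_mul (Nat.cast_nonneg m), Real.sqrt_sq dist_nonneg]
      _ = (Real.toNNReal (Real.sqrt m) : ℝ) * dist x y := by
          rw [Real.coe_toNNReal _ (Real.sqrt_nonneg _)]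
  have hsub : Metric.closedBall (0 : EuclideanSpace ℝ (Fin m)) r ⊆
      ψ '' (Metric.closedBall (0 : Fin m → ℝ) r) := by
    intro x hx
    refine ⟨EuclideanSpace.equiv (Fin m) ℝ x, ?_, by simp [hψ]; rfl⟩
    rw [Metric.mem_closedBall] at hx ⊢
    rw [dist_pi_le_iff hr]
    intro i
    have hxi : dist ((EuclideanSpace.equiv (Fin m) ℝ x) i) ((0: Fin m → ℝ) i) = |x i| := by
      simp [Real.dist_eq]
    rw [hxi]
    calc |x i| ≤ ‖x‖ := abs_coord_le x i
      _ = dist x 0 := by simp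
      _ ≤ r := hx
  calc μH[(m:ℝ)] (Metric.closedBall (0 : EuclideanSpace ℝ (Fin m)) r)
      ≤ μH[(m:ℝ)] (ψ '' (Metric.closedBall (0 : Fin m → ℝ) r)) := measure_mono hsub
    _ ≤ (Real.toNNReal (Real.sqrt m) : ℝ≥0∞) ^ (m:ℝ) * μH[(m:ℝ)] (Metric.closedBall (0 : Fin m → ℝ) r) :=
        hlip.hausdorffMeasure_image_le (by positivity) _
    _ ≤ (Real.toNNReal (Real.sqrt m) : ℝ≥0∞) ^ (m:ℝ) * ENNReal.ofReal ((2*r)^m) := by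
        apply mul_le_mul_right
        have hpi : (μH[(m : ℝ)] : Measure (Fin m → ℝ)) = volume := by
          have h := hausdorffMeasure_pi_real (ι := Fin m)
          rwa [Fintype.card_fin] at h
        rw [hpi, Real.volume_pi_closedBall 0 hr]
        simp

/-- slab bound constant -/
def slabB (n : ℕ) (ρ : ℝ) : ℝ≥0∞ :=
  (Real.toNNReal (Real.sqrt (n-1 : ℕ)) : ℝ≥0∞) ^ ((n-1 : ℕ) : ℝ) * ENNReal.ofReal ((2*(2*ρ))^(n-1 : ℕ))

lemma slabB_lt_top (n : ℕ) (ρ : ℝ) : slabB n ρ < ∞ := by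
  unfold slabB
  apply ENNReal.mul_lt_top
  · exact ENNReal.rpow_lt_top_of_nonneg (Nat.cast_nonneg _) ENNReal.coe_ne_top
  · exact ENNReal.ofReal_lt_top

lemma slab_bound {n : ℕ} (hn : 2 ≤ n) (u : En n) (hu : ‖u‖ = 1) (c ρ : ℝ) (hc : |c| ≤ ρ) :
    μH[((n : ℝ) - 1)] {x : En n | ⟪x, u⟫_ℝ = c ∧ ‖x‖ ≤ ρ} ≤ slabB n ρ := by
  classical
  have hρ : 0 ≤ ρ := le_trans (abs_nonneg c) hc
  have hune : u ≠ 0 := by intro h; rw [h, norm_zero] at hu; norm_num at hu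
  haveI : Fact (Module.finrank ℝ (En n) = (n-1) + 1) := ⟨by
    rw [finrank_euclideanSpace_fin]; omega⟩
  have hrank : Module.finrank ℝ ((ℝ ∙ u)ᗮ : Submodule ℝ (En n)) = n - 1 :=
    Submodule.finrank_orthogonal_span_singleton hune
  set W := ((ℝ ∙ u)ᗮ : Submodule ℝ (En n))
  set m := Module.finrank ℝ W with hm
  -- the isometric embedding of Euclidean (n-1)-space onto W
  set b := stdOrthonormalBasis ℝ W
  set φ : EuclideanSpace ℝ (Fin m) → En n := fun y => (b.repr.symm y : En n) with hφ
  have hφiso : Isometry φ := by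
    have h1 : Isometry (fun y : EuclideanSpace ℝ (Fin m) => b.repr.symm y) :=
      b.repr.symm.isometry
    have h2 : Isometry (fun w : W => (w : En n)) := isometry_subtype_coe
    exact h2.comp h1
  set S : Set (En n) := {x : En n | ⟪x, u⟫_ℝ = c ∧ ‖x‖ ≤ ρ} with hS
  set S' : Set (En n) := (fun x => x - c • u) '' S with hS'
  have hd : (0:ℝ) ≤ (n:ℝ) - 1 := by
    have : (2:ℝ) ≤ n := by exact_mod_cast hn
    linarith
  have hdm : ((n:ℝ) - 1) = (m : ℝ) := by
    rw [hrank, Nat.cast_sub (show 1 ≤ n by omega)]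
    simp
  -- translation invariance
  have htrans : μH[((n : ℝ) - 1)] S' = μH[((n : ℝ) - 1)] S := by
    rw [hS']
    have hiso : Isometry (fun x : En n => x - c • u) := Isometry.of_dist_eq (by
      intro a b; simp [dist_eq_norm])
    exact hiso.hausdorffMeasure_image (Or.inl hd) S
  have hmemW : S' ⊆ (W : Set (En n)) := by
    rintro _ ⟨x, ⟨hxc, _⟩, rfl⟩
    apply Submodule.mem_orthogonal_singleton_iff_inner_right.2
    rw [inner_sub_right, real_inner_smul_right]
    have : ⟪u, x⟫_ℝ = c := by rw [real_inner_comm]; exact hxc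
    rw [this, real_inner_self_eq_norm_sq, hu]
    ring
  set T : Set (EuclideanSpace ℝ (Fin m)) := φ ⁻¹' S' with hT
  have himg : S' = φ '' T := by
    rw [hT, Set.image_preimage_eq_inter_range]
    have : Set.range φ = (W : Set (En n)) := by
      rw [hφ]
      ext z; constructor
      · rintro ⟨y, rfl⟩; exact ((b.repr.symm y)).2
      · intro hz; exact ⟨b.repr ⟨z, hz⟩, by simp⟩
    rw [this]
    exact (Set.inter_eq_left.2 hmemW).symm
  have hTball : T ⊆ Metric.closedBall 0 (2*ρ) := by
    intro y hy
    rw [Metric.mem_closedBall, dist_zero_right]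
    have : ‖φ y‖ = ‖y‖ := by
      have := hφiso.dist_eq y 0
      simpa [hφ, dist_eq_norm] using this
    rw [← this]
    obtain ⟨x, ⟨_, hxρ⟩, hfx⟩ := hy
    rw [← hfx]
    calc ‖x - c • u‖ ≤ ‖x‖ + ‖c • u‖ := norm_sub_le _ _
      _ ≤ ρ + |c| * 1 := by
          rw [norm_smul, hu, Real.norm_eq_abs]
          exact add_le_add hxρ (le_refl _)
      _ ≤ 2*ρ := by linarith
  calc μH[((n : ℝ) - 1)] S = μH[((n : ℝ) - 1)] S' := htrans.symm
    _ = μH[((n : ℝ) - 1)] (φ '' T) := by rw [himg]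
    _ = μH[((n : ℝ) - 1)] T := hφiso.hausdorffMeasure_image (Or.inl hd) T
    _ ≤ μH[((n : ℝ) - 1)] (Metric.closedBall (0 : EuclideanSpace ℝ (Fin m)) (2*ρ)) :=
        measure_mono hTball
    _ ≤ slabB n ρ := by
        rw [hdm]
        unfold slabB
        rw [← hrank]
        exact hm_ball_le m (2*ρ) (by linarith)

lemma exists_proj {n : ℕ} {K : Set (En n)} (hK : Convex ℝ K) (hKc : IsCompact K)
    (hne : K.Nonempty) :
    ∃ P : En n → En n, LipschitzWith 1 P ∧
      ∀ x ∈ K, ∀ t : ℝ, 0 ≤ t → ∀ u : En n,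
        (∀ y ∈ K, ⟪y - x, u⟫_ℝ ≤ 0) → P (x + t • u) = x := by
  classical
  have hex : ∀ z : En n, ∃ v ∈ K, ∀ w ∈ K, ⟪z - v, w - v⟫_ℝ ≤ 0 := by
    intro z
    obtain ⟨v, hvK, hvd⟩ := hKc.exists_infDist_eq_dist hne z
    refine ⟨v, hvK, ?_⟩
    rw [← norm_eq_iInf_iff_real_inner_le_zero hK hvK]
    rw [Metric.infDist_eq_iInf] at hvd
    have h0 : (⨅ w : K, dist z w) = ⨅ w : K, ‖z - w‖ := by simp_rw [dist_eq_norm]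
    rw [h0, dist_eq_norm] at hvd
    exact hvd.symm
  choose P hPK hPvar using hex
  refine ⟨P, ?_, ?_⟩
  · apply LipschitzWith.of_dist_le_mul
    intro z z'
    rw [NNReal.coe_one, one_mul, dist_eq_norm, dist_eq_norm]
    have h1 := hPvar z (P z') (hPK z')
    have h2 := hPvar z' (P z) (hPK z)
    -- h1 : ⟪z - P z, P z' - P z⟫ ≤ 0 ; h2 : ⟪z' - P z', P z - P z'⟫ ≤ 0
    have key : ‖P z - P z'‖^2 ≤ ⟪z - z', P z - P z'⟫_ℝ := by
      have e : ⟪z - z', P z - P z'⟫_ℝ - ‖P z - P z'‖^2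
          = -⟪z - P z, P z' - P z⟫_ℝ - ⟪z' - P z', P z - P z'⟫_ℝ := by
        rw [← real_inner_self_eq_norm_sq]
        simp only [inner_sub_left, inner_sub_right]
        ring
      nlinarith [h1, h2]
    have h3 : ⟪z - z', P z - P z'⟫_ℝ ≤ ‖z - z'‖ * ‖P z - P z'‖ := real_inner_le_norm _ _
    rcases eq_or_lt_of_le (norm_nonneg (P z - P z')) with h0 | h0
    · rw [← h0]; exact norm_nonneg _
    · nlinarith [key, h3]
  · intro x hx t ht u hu
    set z := x + t • u
    have h1 := hPvar z x hx          -- ⟪z - P z, x - P z⟫ ≤ 0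
    have h2 : ⟪z - x, P z - x⟫_ℝ ≤ 0 := by
      have : z - x = t • u := by simp [z]
      rw [this, real_inner_smul_left]
      have h5 := hu (P z) (hPK z)
      rw [real_inner_comm] at h5
      exact mul_nonpos_of_nonneg_of_nonpos ht h5
    have key : ‖x - P z‖^2 ≤ 0 := by
      have e : ‖x - P z‖^2 = ⟪z - x, P z - x⟫_ℝ + ⟪z - P z, x - P z⟫_ℝ := by
        rw [← real_inner_self_eq_norm_sq]
        simp only [inner_sub_left, inner_sub_right]
        ring
      rw [e]; linarith
    have : x - P z = 0 := by
      have := norm_nonneg (x - P z)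
      have h4 : ‖x - P z‖ = 0 := by nlinarith
      exact norm_eq_zero.1 h4
    have := sub_eq_zero.1 this
    exact this.symm

def massB (n : ℕ) (R : ℝ) : ℝ≥0∞ := (2*n+2 : ℕ) * slabB n (4*R*(n+1))

lemma massB_lt_top (n : ℕ) (R : ℝ) : massB n R < ∞ :=
  ENNReal.mul_lt_top (ENNReal.natCast_lt_top _) (slabB_lt_top _ _)

lemma mass_bound {n : ℕ} (hn : 2 ≤ n) {R : ℝ} (hR : 0 < R) {K : Set (En n)}
    (hK : Convex ℝ K) (hKc : IsCompact K) (hne : K.Nonempty)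
    (hKR : K ⊆ Metric.closedBall 0 R) {μ : Measure (Sph n)}
    (hμ : IsSurfaceAreaMeasure K μ) : μ Set.univ ≤ massB n R := by
  classical
  set ρ : ℝ := 4*R*(n+1) with hρdef
  have hRρ : R ≤ ρ := by
    have h1 : (0:ℝ) ≤ (n:ℝ) := Nat.cast_nonneg n
    nlinarith
  have hKnorm : ∀ x ∈ K, ‖x‖ ≤ R := by
    intro x hx
    have := hKR hx
    rwa [Metric.mem_closedBall, dist_zero_right] at this
  rcases hμ with ⟨hint, hω⟩ | ⟨hint, u, u', hu', ⟨c, hc⟩, hμeq⟩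
  · -- nondegenerate case
    obtain ⟨P, hPlip, hPproj⟩ := exists_proj hK hKc hne
    have hμuniv := hω Set.univ MeasurableSet.univ
    set A : Set (En n) :=
      {x ∈ frontier K | ∃ u ∈ (Set.univ : Set (Sph n)), ∀ y ∈ K, ⟪y - x, (u : En n)⟫_ℝ ≤ 0} with hA
    set slabSet : Fin n × Bool → Set (En n) := fun p =>
      {z : En n | ⟪z, EuclideanSpace.single p.1 (1:ℝ)⟫_ℝ = (if p.2 then 2*R else -(2*R)) ∧ ‖z‖ ≤ ρ}
      with hslabSet
    have hincl : A ⊆ ⋃ p : Fin n × Bool, P '' slabSet p := by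
      rintro x ⟨hxf, w, -, hw⟩
      have hxK : x ∈ K := by
        have h1 : x ∈ closure K := frontier_subset_closure hxf
        rwa [hKc.isClosed.closure_eq] at h1
      have hunorm : ‖(w : En n)‖ = 1 := by
        have := w.2
        rwa [mem_sphere_zero_iff_norm] at this
      haveI : Nonempty (Fin n) := ⟨⟨0, by omega⟩⟩
      obtain ⟨j, -, hj⟩ := Finset.exists_max_image Finset.univ
        (fun i => |(w : En n) i|) ⟨⟨0, by omega⟩, Finset.mem_univ _⟩
      set a : ℝ := (w : En n) j with hadef
      have hsum : ∑ i, ((w : En n) i)^2 = 1 := by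
        have h1 := hunorm
        rw [EuclideanSpace.norm_eq] at h1
        have h2 := congrArg (fun r : ℝ => r^2) h1
        simp only [Real.sq_sqrt (Finset.sum_nonneg fun i _ => sq_nonneg _)] at h2
        · simpa [Real.norm_eq_abs, sq_abs] using h2
      have hna : 1 ≤ (n:ℝ) * a^2 := by
        have h1 : ∀ i, ((w : En n) i)^2 ≤ a^2 := by
          intro i
          have := hj i (Finset.mem_univ i)
          calc ((w : En n) i)^2 = |(w : En n) i|^2 := (sq_abs _).symm
            _ ≤ |a|^2 := by exact pow_le_pow_left₀ (abs_nonneg _) this 2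
            _ = a^2 := sq_abs _
        calc (1:ℝ) = ∑ i, ((w : En n) i)^2 := hsum.symm
          _ ≤ ∑ _i : Fin n, a^2 := Finset.sum_le_sum (fun i _ => h1 i)
          _ = (n:ℝ) * a^2 := by simp [mul_comm]
      have ha0 : a ≠ 0 := by
        intro h; rw [h] at hna; norm_num at hna
      have hainv : 1/|a| ≤ Real.sqrt n := by
        have h1 : (1:ℝ)/(n:ℝ) ≤ a^2 := by
          rw [div_le_iff₀ (by positivity : (0:ℝ) < (n:ℝ))]
          linarith [hna]
        have h2 : Real.sqrt (1/(n:ℝ)) ≤ |a| := by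
          rw [← Real.sqrt_sq_eq_abs]
          exact Real.sqrt_le_sqrt h1
        have h3 : (0:ℝ) < Real.sqrt (1/(n:ℝ)) := Real.sqrt_pos.2 (by positivity)
        rw [div_le_iff₀ (lt_of_lt_of_le h3 h2)]
        have h4 : Real.sqrt n * Real.sqrt (1/(n:ℝ)) = 1 := by
          rw [← Real.sqrt_mul (Nat.cast_nonneg n)]
          rw [mul_one_div_cancel (by positivity : (n:ℝ) ≠ 0)]
          exact Real.sqrt_one
        calc (1:ℝ) = Real.sqrt n * Real.sqrt (1/(n:ℝ)) := h4.symm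
          _ ≤ Real.sqrt n * |a| := by
              apply mul_le_mul_of_nonneg_left h2 (Real.sqrt_nonneg _)
      set σ : Bool := decide (0 < a) with hσ
      set v : ℝ := if σ then 2*R else -(2*R) with hv
      set t : ℝ := (v - x j)/a with ht
      have hxj : |x j| ≤ R := le_trans (abs_coord_le x j) (hKnorm x hxK)
      have habs : |x j| ≤ ‖x‖ := abs_coord_le x j
      have ht0 : 0 ≤ t := by
        rcases lt_or_gt_of_ne ha0 with hneg | hpos
        · have hσf : σ = false := by
            rw [hσ]; simp only [decide_eq_false_iff_not]; intro h; linarith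
          have hv0 : v = -(2*R) := by rw [hv, hσf]; simp
          rw [ht, hv0]
          have hnum : -(2*R) - x j ≤ 0 := by
            have h6 := abs_le.1 hxj; linarith [h6.1]
          rw [div_nonneg_iff]
          right
          exact ⟨hnum, le_of_lt hneg⟩
        · have hσt : σ = true := by rw [hσ]; simp [hpos]
          rw [ht, hv, hσt]
          simp only [if_true]
          apply div_nonneg _ (le_of_lt hpos)
          have := abs_le.1 hxj
          linarith [this.2]
      have htle : t ≤ 3*R*Real.sqrt n := by
        have h1 : |v - x j| ≤ 3*R := by
          have h2 := abs_le.1 hxj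
          rw [hv]
          rcases Bool.dichotomy σ with h | h <;> rw [h] <;> simp <;> rw [abs_le] <;>
            constructor <;> linarith [h2.1, h2.2]
        calc t ≤ |t| := le_abs_self t
          _ = |v - x j|/|a| := by rw [ht, abs_div]
          _ ≤ (3*R) * (1/|a|) := by
              rw [div_eq_mul_one_div]
              apply mul_le_mul_of_nonneg_right h1 (by positivity)
          _ ≤ (3*R) * Real.sqrt n := by
              apply mul_le_mul_of_nonneg_left hainv (by positivity)
      set z : En n := x + t • (w : En n) with hz
      have hzj : z j = v := by
        have : z j = x j + t * a := by
          rw [hz]; simp [hadef]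
        rw [this, ht, div_mul_cancel₀ _ ha0]; ring
      have hzslab : z ∈ slabSet (j, σ) := by
        constructor
        · show ⟪z, EuclideanSpace.single j (1:ℝ)⟫_ℝ = _
          rw [EuclideanSpace.inner_single_right]
          simpa using hzj
        · show ‖z‖ ≤ ρ
          have hsn : Real.sqrt n ≤ n := by
            have h1 : (1:ℝ) ≤ (n:ℝ) := by exact_mod_cast (show 1 ≤ n by omega)
            have h2 : Real.sqrt ((n:ℝ)) ≤ Real.sqrt ((n:ℝ)^2) :=
              Real.sqrt_le_sqrt (by nlinarith)
            rwa [Real.sqrt_sq (by linarith)] at h2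
          calc ‖z‖ ≤ ‖x‖ + ‖t • (w : En n)‖ := norm_add_le _ _
            _ = ‖x‖ + |t| * 1 := by rw [norm_smul, hunorm, Real.norm_eq_abs]
            _ ≤ R + 3*R*Real.sqrt n := by
                have : |t| = t := abs_of_nonneg ht0
                rw [this]
                have := hKnorm x hxK
                linarith [htle]
            _ ≤ R + 3*R*n := by nlinarith
            _ ≤ ρ := by rw [hρdef]; nlinarith
      refine Set.mem_iUnion.2 ⟨(j, σ), ⟨z, hzslab, ?_⟩⟩
      rw [hz]
      exact hPproj x hxK t ht0 (w : En n) hw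
    calc μ Set.univ = μH[((n : ℝ) - 1)] A := hμuniv
      _ ≤ μH[((n : ℝ) - 1)] (⋃ p : Fin n × Bool, P '' slabSet p) := measure_mono hincl
      _ ≤ ∑' p : Fin n × Bool, μH[((n : ℝ) - 1)] (P '' slabSet p) := measure_iUnion_le _
      _ = ∑ p : Fin n × Bool, μH[((n : ℝ) - 1)] (P '' slabSet p) := tsum_fintype _
      _ ≤ ∑ _p : Fin n × Bool, slabB n ρ := by
          apply Finset.sum_le_sum
          intro p _
          have hd : (0:ℝ) ≤ (n:ℝ) - 1 := by
            have : (2:ℝ) ≤ n := by exact_mod_cast hn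
            linarith
          calc μH[((n : ℝ) - 1)] (P '' slabSet p)
              ≤ (1:ℝ≥0) ^ ((n:ℝ)-1) * μH[((n : ℝ) - 1)] (slabSet p) :=
                hPlip.hausdorffMeasure_image_le hd _
            _ = μH[((n : ℝ) - 1)] (slabSet p) := by
                rw [ENNReal.coe_one, ENNReal.one_rpow, one_mul]
            _ ≤ slabB n ρ := by
                apply slab_bound hn _ (by simpa using EuclideanSpace.norm_single p.1 (1:ℝ)) _ _ _
                have h2R : |2*R| ≤ ρ := by
                  rw [abs_of_pos (by linarith), hρdef]
                  nlinarith [Nat.cast_nonneg (α := ℝ) n]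
                rcases Bool.dichotomy p.2 with h | h <;> rw [h] <;> simpa using h2R
      _ ≤ massB n R := by
          rw [Finset.sum_const, Finset.card_univ]
          have hcard : Fintype.card (Fin n × Bool) = 2*n := by
            simp [Fintype.card_prod, mul_comm]
          rw [hcard, massB, nsmul_eq_mul]
          exact mul_le_mul_left
            (by exact_mod_cast Nat.cast_le.2 (show 2*n ≤ 2*n+2 by omega)) _
  · -- degenerate case
    obtain ⟨x₀, hx₀⟩ := hne
    have hunorm : ‖(u : En n)‖ = 1 := by
      have := u.2
      rwa [mem_sphere_zero_iff_norm] at this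
    have hcle : |c| ≤ ρ := by
      have h1 : c = ⟪x₀, (u : En n)⟫_ℝ := (hc x₀ hx₀).symm
      have h2 : |⟪x₀, (u : En n)⟫_ℝ| ≤ ‖x₀‖ * ‖(u : En n)‖ := abs_real_inner_le_norm _ _
      rw [h1]
      calc |⟪x₀, (u : En n)⟫_ℝ| ≤ ‖x₀‖ * 1 := by rw [← hunorm]; exact h2
        _ ≤ R := by rw [mul_one]; exact hKnorm x₀ hx₀
        _ ≤ ρ := hRρ
    have hKsub : K ⊆ {x : En n | ⟪x, (u : En n)⟫_ℝ = c ∧ ‖x‖ ≤ ρ} := by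
      intro x hx
      exact ⟨hc x hx, le_trans (hKnorm x hx) hRρ⟩
    have hμu : μ Set.univ = μH[((n : ℝ) - 1)] K * 2 := by
      rw [hμeq]
      rw [Measure.smul_apply, smul_eq_mul]
      congr 1
      rw [Measure.add_apply, Measure.dirac_apply_of_mem (Set.mem_univ _),
        Measure.dirac_apply_of_mem (Set.mem_univ _)]
      norm_num
    rw [hμu]
    calc μH[((n : ℝ) - 1)] K * 2 ≤ slabB n ρ * 2 := by
          apply mul_le_mul_left
          exact le_trans (measure_mono hKsub) (slab_bound hn _ hunorm c ρ hcle)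
      _ ≤ massB n R := by
          rw [massB, mul_comm]
          exact mul_le_mul_left
            (by exact_mod_cast Nat.cast_le.2 (show 2 ≤ 2*n+2 by omega)) _

def bern (s k : ℕ) (t : ℝ) : ℝ := (s.choose k : ℝ) * t^k * (1-t)^(s-k)

lemma bern_nonneg {s k : ℕ} {t : ℝ} (h0 : 0 ≤ t) (h1 : t ≤ 1) : 0 ≤ bern s k t := by
  unfold bern
  have : (0:ℝ) ≤ 1 - t := by linarith
  positivity

lemma bern_sum (s : ℕ) (t : ℝ) : ∑ k ∈ Finset.range (s+1), bern s k t = 1 := by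
  have h := add_pow t (1-t) s
  simp only [add_sub_cancel, one_pow] at h
  conv_rhs => rw [h]
  apply Finset.sum_congr rfl
  intro k _
  unfold bern
  ring

lemma bern_var {s : ℕ} (hs : 0 < s) {t : ℝ} (h0 : 0 ≤ t) (h1 : t ≤ 1) :
    ∑ k ∈ Finset.range (s+1), (t - k/s)^2 * bern s k t = t*(1-t)/s := by
  have hvar := bernstein.variance (n := s) (by exact_mod_cast hs.ne') (x := ⟨t, h0, h1⟩)
  rw [← hvar, Finset.sum_range]
  apply Finset.sum_congr rfl
  intro k _
  congr 1
  rw [bernstein_apply]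
  unfold bern
  norm_num

lemma bern_coeff (s k : ℕ) (hk : k ≤ s) : ∃ co : ℕ → ℝ,
    ∀ y : ℝ, bern s k ((y+1)/2) = ∑ i ∈ Finset.range (s+1), co i * y^i := by
  classical
  set p : Polynomial ℝ := Polynomial.C ((s.choose k : ℝ)) *
    (Polynomial.C (1/2) * (Polynomial.X + Polynomial.C 1))^k *
    (Polynomial.C (1/2) * (Polynomial.C 1 - Polynomial.X))^(s-k) with hp
  have hdeg : p.natDegree < s + 1 := by
    have h1 : (Polynomial.C (1/2 : ℝ) * (Polynomial.X + Polynomial.C 1)).natDegree ≤ 1 := by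
      apply le_trans (Polynomial.natDegree_mul_le)
      rw [Polynomial.natDegree_C, Polynomial.natDegree_X_add_C]
    have h2 : (Polynomial.C (1/2 : ℝ) * (Polynomial.C 1 - Polynomial.X)).natDegree ≤ 1 := by
      apply le_trans (Polynomial.natDegree_mul_le)
      have : (Polynomial.C (1:ℝ) - Polynomial.X).natDegree ≤ 1 := by
        apply le_trans (Polynomial.natDegree_sub_le _ _)
        simp
      simpa using this
    have h3 : p.natDegree ≤ 0 + k*1 + (s-k)*1 := by
      rw [hp]
      apply le_trans (Polynomial.natDegree_mul_le)
      apply add_le_add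
      · apply le_trans (Polynomial.natDegree_mul_le)
        apply add_le_add
        · simp
        · exact le_trans (Polynomial.natDegree_pow_le) (by nlinarith [h1])
      · exact le_trans (Polynomial.natDegree_pow_le) (by nlinarith [h2])
    omega
  refine ⟨fun i => p.coeff i, fun y => ?_⟩
  have heval : p.eval y = bern s k ((y+1)/2) := by
    rw [hp]
    simp only [Polynomial.eval_mul, Polynomial.eval_pow, Polynomial.eval_add,
      Polynomial.eval_sub, Polynomial.eval_X, Polynomial.eval_C]
    unfold bern
    have e1 : (1:ℝ)/2 * (y + 1) = (y+1)/2 := by ring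
    have e2 : (1:ℝ)/2 * (1 - y) = 1 - (y+1)/2 := by ring
    rw [e1, e2]
  rw [← heval, Polynomial.eval_eq_sum_range' hdeg]

def nd (n s : ℕ) (k : Fin n → ℕ) : En n := WithLp.toLp 2 (fun j => 2*(k j : ℝ)/s - 1)

@[simp] lemma nd_apply (n s : ℕ) (k : Fin n → ℕ) (j : Fin n) :
    nd n s k j = 2*(k j : ℝ)/s - 1 := rfl

lemma bernstein_multi_approx {n : ℕ} {g : En n → ℝ} {Lf : ℝ} (hLf : 0 ≤ Lf)
    (hg : ∀ x y : En n, |g x - g y| ≤ Lf * ‖x - y‖) (s : ℕ) (hs : 1 ≤ s)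
    {x : En n} (hxc : ∀ j, |x j| ≤ 1) :
    |g x - ∑ k ∈ Fintype.piFinset (fun _ : Fin n => Finset.range (s+1)),
        g (nd n s k) * ∏ j, bern s (k j) ((x j + 1)/2)|
      ≤ Lf * Real.sqrt ((n : ℝ) / s) := by
  classical
  have hs0 : (0:ℝ) < s := by exact_mod_cast hs
  set KS := Fintype.piFinset (fun _ : Fin n => Finset.range (s+1)) with hKS
  set t : Fin n → ℝ := fun j => (x j + 1)/2 with htdef
  have ht01 : ∀ j, 0 ≤ t j ∧ t j ≤ 1 := by
    intro j
    have h := abs_le.1 (hxc j)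
    constructor
    · show 0 ≤ (x j + 1)/2; linarith [h.1]
    · show (x j + 1)/2 ≤ 1; linarith [h.2]
  set w : (Fin n → ℕ) → ℝ := fun k => ∏ j, bern s (k j) (t j) with hwdef
  have hw0 : ∀ k, 0 ≤ w k := by
    intro k
    apply Finset.prod_nonneg
    intro j _
    exact bern_nonneg (ht01 j).1 (ht01 j).2
  have hw1 : ∑ k ∈ KS, w k = 1 := by
    have h := Finset.prod_univ_sum (fun _ : Fin n => Finset.range (s+1))
      (fun j a => bern s a (t j))
    calc (∑ k ∈ KS, w k)
        = ∏ j, ∑ a ∈ Finset.range (s+1), bern s a (t j) := h.symm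
      _ = 1 := Finset.prod_eq_one fun j _ => bern_sum s (t j)
  have hBw : ∀ k, g (nd n s k) * ∏ j, bern s (k j) ((x j + 1)/2) = g (nd n s k) * w k :=
    fun k => rfl
  have hstep1 : g x - ∑ k ∈ KS, g (nd n s k) * w k = ∑ k ∈ KS, w k * (g x - g (nd n s k)) := by
    rw [eq_comm]
    calc ∑ k ∈ KS, w k * (g x - g (nd n s k))
        = ∑ k ∈ KS, (w k * g x - g (nd n s k) * w k) := by
          apply Finset.sum_congr rfl; intro k _; ring
      _ = (∑ k ∈ KS, w k) * g x - ∑ k ∈ KS, g (nd n s k) * w k := by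
          rw [Finset.sum_sub_distrib, Finset.sum_mul]
      _ = g x - ∑ k ∈ KS, g (nd n s k) * w k := by rw [hw1, one_mul]
  set Sab := ∑ k ∈ KS, w k * (Lf * ‖x - nd n s k‖) with hSab
  have habs : |g x - ∑ k ∈ KS, g (nd n s k) * w k| ≤ Sab := by
    rw [hstep1]
    calc |∑ k ∈ KS, w k * (g x - g (nd n s k))|
        ≤ ∑ k ∈ KS, |w k * (g x - g (nd n s k))| := Finset.abs_sum_le_sum_abs _ _
      _ ≤ Sab := by
          apply Finset.sum_le_sum
          intro k _
          rw [abs_mul, abs_of_nonneg (hw0 k)]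
          exact mul_le_mul_of_nonneg_left (hg x (nd n s k)) (hw0 k)
  have hnorm2 : ∀ k, ‖x - nd n s k‖^2 = ∑ j, (x j - nd n s k j)^2 := by
    intro k
    rw [EuclideanSpace.norm_eq, Real.sq_sqrt (Finset.sum_nonneg fun j _ => sq_nonneg _)]
    apply Finset.sum_congr rfl
    intro j _
    rw [Real.norm_eq_abs, sq_abs, PiLp.sub_apply]
  have hjsum : ∀ j, ∑ k ∈ KS, w k * (x j - nd n s k j)^2 ≤ 1/(s:ℝ) := by
    intro j
    set h : Fin n → ℕ → ℝ := fun i a =>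
      if i = j then bern s a (t i) * (x j - (2*(a:ℝ)/s - 1))^2 else bern s a (t i) with hhdef
    have claim1 : ∀ k, w k * (x j - nd n s k j)^2 = ∏ i, h i (k i) := by
      intro k
      have e1 : ∏ i, h i (k i) = (∏ i ∈ Finset.univ.erase j, h i (k i)) * h j (k j) :=
        (Finset.prod_erase_mul _ _ (Finset.mem_univ j)).symm
      have e2 : w k = (∏ i ∈ Finset.univ.erase j, bern s (k i) (t i)) * bern s (k j) (t j) :=
        (Finset.prod_erase_mul _ _ (Finset.mem_univ j)).symm
      have e3 : ∏ i ∈ Finset.univ.erase j, h i (k i)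
          = ∏ i ∈ Finset.univ.erase j, bern s (k i) (t i) := by
        apply Finset.prod_congr rfl
        intro i hi
        rw [hhdef]
        simp only [if_neg (Finset.ne_of_mem_erase hi)]
      have e4 : h j (k j) = bern s (k j) (t j) * (x j - (2*((k j):ℝ)/s - 1))^2 := by
        rw [hhdef]; simp
      rw [e1, e3, e4, e2, nd_apply]
      ring
    have claim2 : ∑ k ∈ KS, ∏ i, h i (k i) = ∏ i, ∑ a ∈ Finset.range (s+1), h i a :=
      (Finset.prod_univ_sum _ _).symm
    have claim3 : ∏ i, (∑ a ∈ Finset.range (s+1), h i a)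
        = ∑ a ∈ Finset.range (s+1), bern s a (t j) * (x j - (2*(a:ℝ)/s - 1))^2 := by
      have e1 : ∏ i, (∑ a ∈ Finset.range (s+1), h i a)
          = (∏ i ∈ Finset.univ.erase j, ∑ a ∈ Finset.range (s+1), h i a)
            * ∑ a ∈ Finset.range (s+1), h j a :=
        (Finset.prod_erase_mul _ _ (Finset.mem_univ j)).symm
      have e2 : ∀ i ∈ Finset.univ.erase j, ∑ a ∈ Finset.range (s+1), h i a = 1 := by
        intro i hi
        have : ∀ a, h i a = bern s a (t i) := by
          intro a; rw [hhdef]; simp only [if_neg (Finset.ne_of_mem_erase hi)]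
        simp only [this]
        exact bern_sum s (t i)
      have e3 : ∑ a ∈ Finset.range (s+1), h j a
          = ∑ a ∈ Finset.range (s+1), bern s a (t j) * (x j - (2*(a:ℝ)/s - 1))^2 := by
        apply Finset.sum_congr rfl
        intro a _
        rw [hhdef]; simp
      rw [e1, Finset.prod_congr rfl e2, Finset.prod_const_one, one_mul, e3]
    have hval : ∑ a ∈ Finset.range (s+1), bern s a (t j) * (x j - (2*(a:ℝ)/s - 1))^2
        = 4 * (t j * (1 - t j) / s) := by
      have hx2t : x j = 2 * t j - 1 := by rw [htdef]; ring
      calc ∑ a ∈ Finset.range (s+1), bern s a (t j) * (x j - (2*(a:ℝ)/s - 1))^2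
          = ∑ a ∈ Finset.range (s+1), 4 * ((t j - (a:ℝ)/s)^2 * bern s a (t j)) := by
            apply Finset.sum_congr rfl
            intro a _
            rw [hx2t]
            ring
        _ = 4 * ∑ a ∈ Finset.range (s+1), (t j - (a:ℝ)/s)^2 * bern s a (t j) := by
            rw [Finset.mul_sum]
        _ = 4 * (t j * (1 - t j) / s) := by
            rw [bern_var (by omega) (ht01 j).1 (ht01 j).2]
    calc ∑ k ∈ KS, w k * (x j - nd n s k j)^2
        = ∑ k ∈ KS, ∏ i, h i (k i) := Finset.sum_congr rfl (fun k _ => claim1 k)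
      _ = 4 * (t j * (1 - t j) / s) := by rw [claim2, claim3, hval]
      _ ≤ 1/(s:ℝ) := by
          rw [show (4:ℝ) * (t j * (1 - t j) / s) = (4 * (t j * (1 - t j)))/s by ring,
            div_le_div_iff₀ hs0 hs0]
          nlinarith [mul_nonneg (sq_nonneg (2*t j - 1)) hs0.le]
  have hQ : ∑ k ∈ KS, w k * ‖x - nd n s k‖^2 ≤ (n:ℝ)/s := by
    calc ∑ k ∈ KS, w k * ‖x - nd n s k‖^2
        = ∑ k ∈ KS, ∑ j, w k * (x j - nd n s k j)^2 := by
          apply Finset.sum_congr rfl; intro k _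
          rw [hnorm2 k, Finset.mul_sum]
      _ = ∑ j, ∑ k ∈ KS, w k * (x j - nd n s k j)^2 := Finset.sum_comm
      _ ≤ ∑ _j : Fin n, 1/(s:ℝ) := Finset.sum_le_sum (fun j _ => hjsum j)
      _ = (n:ℝ)/s := by
          rw [Finset.sum_const, Finset.card_univ, Fintype.card_fin, nsmul_eq_mul]
          ring
  have hCS : Sab^2 ≤ Lf^2 * ((n:ℝ)/s) := by
    have h1 := Finset.sum_sq_le_sum_mul_sum_of_sq_eq_mul KS
      (r := fun k => w k * (Lf * ‖x - nd n s k‖))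
      (f := w) (g := fun k => w k * (Lf * ‖x - nd n s k‖)^2)
      (fun k _ => hw0 k)
      (fun k _ => mul_nonneg (hw0 k) (sq_nonneg _))
      (fun k _ => by ring)
    rw [hw1, one_mul] at h1
    calc Sab^2 ≤ ∑ k ∈ KS, w k * (Lf * ‖x - nd n s k‖)^2 := h1
      _ = Lf^2 * ∑ k ∈ KS, w k * ‖x - nd n s k‖^2 := by
          rw [Finset.mul_sum]
          apply Finset.sum_congr rfl; intro k _; ring
      _ ≤ Lf^2 * ((n:ℝ)/s) := mul_le_mul_of_nonneg_left hQ (sq_nonneg Lf)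
  have hSab0 : 0 ≤ Sab :=
    Finset.sum_nonneg fun k _ => mul_nonneg (hw0 k) (mul_nonneg hLf (norm_nonneg _))
  calc |g x - ∑ k ∈ KS, g (nd n s k) * ∏ j, bern s (k j) ((x j + 1)/2)|
      = |g x - ∑ k ∈ KS, g (nd n s k) * w k| := by rw [Finset.sum_congr rfl fun k _ => hBw k]
    _ ≤ Sab := habs
    _ = Real.sqrt (Sab^2) := (Real.sqrt_sq hSab0).symm
    _ ≤ Real.sqrt (Lf^2 * ((n:ℝ)/s)) := Real.sqrt_le_sqrt hCS
    _ = Lf * Real.sqrt ((n:ℝ)/s) := by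
        rw [Real.sqrt_mul (sq_nonneg Lf), Real.sqrt_sq hLf]

lemma cont_coord {n : ℕ} (j : Fin n) : Continuous (fun u : Sph n => (u : En n) j) := by
  have h2 : Continuous (fun x : En n => x j) := (continuous_apply j).comp (PiLp.continuous_ofLp ..)
  exact h2.comp continuous_subtype_val

lemma integrable_cont {n : ℕ} {μ : Measure (Sph n)} [IsFiniteMeasure μ] {h : Sph n → ℝ}
    (hc : Continuous h) : Integrable h μ := by
  haveI : CompactSpace (Sph n) := Metric.sphere.compactSpace _ _
  exact (BoundedContinuousFunction.mkOfCompact ⟨h, hc⟩).integrable μ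

lemma integrable_mono {n : ℕ} {μ : Measure (Sph n)} [IsFiniteMeasure μ] (i : Fin n → ℕ) :
    Integrable (fun u : Sph n => ∏ j, ((u : En n) j) ^ (i j)) μ := by
  apply integrable_cont
  apply continuous_finset_prod
  intro j _
  exact (cont_coord j).pow (i j)


/-- there is a constant `c = c(n,R,ε) > 0` such that for convex
bodies `K, L ⊆ ℝⁿ` contained in a ball of radius `R` whose surface tensors
coincide up to rank `s₀` (equivalently, the moments of their surface area
measures coincide up to order `s₀`), the Dudley (bounded-Lipschitz) distance of
the surface area measures is at most `c s₀^{(ε-1)/2}`. -/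
theorem stmt12 {n : ℕ} (hn : 2 ≤ n) (R : ℝ) (hR : 0 < R)
    (ε : ℝ) (hε0 : 0 < ε) (hε1 : ε < 1) :
    ∃ c : ℝ, 0 < c ∧
      ∀ K L : Set (En n),
        Convex ℝ K → IsCompact K → K.Nonempty → K ⊆ Metric.closedBall 0 R →
        Convex ℝ L → IsCompact L → L.Nonempty → L ⊆ Metric.closedBall 0 R →
      ∀ μK μL : Measure (Sph n),
        IsSurfaceAreaMeasure K μK → IsSurfaceAreaMeasure L μL →
      ∀ s₀ : ℕ, 1 ≤ s₀ →
        (∀ i : Fin n → ℕ, (∑ j, i j) ≤ s₀ → sphMoment μK i = sphMoment μL i) →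
      ∀ (f : Sph n → ℝ) (bf Lf : ℝ),
        (∀ u, |f u| ≤ bf) → (∀ u v, |f u - f v| ≤ Lf * dist u v) →
        bf + Lf ≤ 1 →
        |∫ u, f u ∂μK - ∫ u, f u ∂μL| ≤ c * (s₀ : ℝ) ^ ((ε - 1) / 2) := by
  classical
  set M : ℝ := (massB n R).toReal with hM
  have hM0 : 0 ≤ M := ENNReal.toReal_nonneg
  have hn0 : (0:ℝ) < n := by
    have : (2:ℝ) ≤ n := by exact_mod_cast hn
    linarith
  set c : ℝ := 2*(M+1) * (2*(n:ℝ) + (n:ℝ)^((1-ε)/2)) with hcdef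
  have hnp : (0:ℝ) < (n:ℝ)^((1-ε)/2) := Real.rpow_pos_of_pos hn0 _
  have hcpos : 0 < c := by
    apply mul_pos (by linarith)
    nlinarith
  refine ⟨c, hcpos, ?_⟩
  intro K L hKconv hKcomp hKne hKR hLconv hLcomp hLne hLR μK μL hμK hμL s₀ hs₀ hmom f bf Lf
    hbf hLip hbL
  have hmK : μK Set.univ ≤ massB n R := mass_bound hn hR hKconv hKcomp hKne hKR hμK
  have hmL : μL Set.univ ≤ massB n R := mass_bound hn hR hLconv hLcomp hLne hLR hμL
  haveI hfinK : IsFiniteMeasure μK := ⟨lt_of_le_of_lt hmK (massB_lt_top n R)⟩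
  haveI hfinL : IsFiniteMeasure μL := ⟨lt_of_le_of_lt hmL (massB_lt_top n R)⟩
  -- the integral bound
  have hintb : ∀ (μ : Measure (Sph n)), IsFiniteMeasure μ → μ Set.univ ≤ massB n R →
      ∀ (h : Sph n → ℝ) (C : ℝ), 0 ≤ C → (∀ u, |h u| ≤ C) →
      |∫ u, h u ∂μ| ≤ C * M := by
    intro μ hfin hμm h C hC hhC
    haveI := hfin
    have h1 : ‖∫ u, h u ∂μ‖ ≤ C * (μ Set.univ).toReal :=
      norm_integral_le_of_norm_le_const (Filter.Eventually.of_forall (fun u => by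
        rw [Real.norm_eq_abs]; exact hhC u))
    rw [Real.norm_eq_abs] at h1
    refine le_trans h1 (mul_le_mul_of_nonneg_left ?_ hC)
    rw [hM]
    exact ENNReal.toReal_mono (massB_lt_top n R).ne hμm
  -- nonnegativity of bf and Lf
  have hj0 : (0:ℕ) < n := by omega
  set j0 : Fin n := ⟨0, hj0⟩ with hj0def
  have hsing : ‖EuclideanSpace.single j0 (1:ℝ)‖ = 1 := by
    rw [EuclideanSpace.norm_single]; norm_num
  set u₀ : Sph n := ⟨EuclideanSpace.single j0 (1:ℝ), by
    rw [mem_sphere_zero_iff_norm]; exact hsing⟩ with hu₀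
  set u₁ : Sph n := ⟨-EuclideanSpace.single j0 (1:ℝ), by
    rw [mem_sphere_zero_iff_norm, norm_neg]; exact hsing⟩ with hu₁
  have hbf0 : 0 ≤ bf := le_trans (abs_nonneg _) (hbf u₀)
  have hdist01 : 0 < dist u₀ u₁ := by
    rw [dist_pos]
    intro hcontr
    have h1 : (u₀ : En n) = (u₁ : En n) := by rw [hcontr]
    have h2 : (u₀ : En n) j0 = (u₁ : En n) j0 := by rw [h1]
    rw [hu₀, hu₁] at h2
    simp only [EuclideanSpace.single_apply, if_pos rfl] at h2
    have h3 : (-EuclideanSpace.single j0 (1:ℝ)) j0 = -1 := by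
      simp [EuclideanSpace.single_apply]
    rw [h3] at h2
    norm_num at h2
  have hLf0 : 0 ≤ Lf := by
    by_contra hcon
    push_neg at hcon
    have h1 := le_trans (abs_nonneg _) (hLip u₀ u₁)
    nlinarith
  have hLf1 : Lf ≤ 1 := by linarith
  have hbf1 : bf ≤ 1 := by linarith
  -- continuity of f
  have hfcont : Continuous f := by
    have : LipschitzWith Lf.toNNReal f := by
      apply LipschitzWith.of_dist_le_mul
      intro u v
      rw [Real.dist_eq, Real.coe_toNNReal _ hLf0]
      exact hLip u v
    exact this.continuous
  have hfintK : Integrable f μK := integrable_cont hfcont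
  have hfintL : Integrable f μL := integrable_cont hfcont
  have hfK : |∫ u, f u ∂μK| ≤ bf * M := hintb μK hfinK hmK f bf hbf0 hbf
  have hfL : |∫ u, f u ∂μL| ≤ bf * M := hintb μL hfinL hmL f bf hbf0 hbf
  -- rpow facts
  have hs₀R : (1:ℝ) ≤ (s₀:ℝ) := by exact_mod_cast hs₀
  have hs₀pos : (0:ℝ) < (s₀:ℝ) := by linarith
  have hexpmono : (s₀:ℝ) ^ (-(1:ℝ)/2) ≤ (s₀:ℝ) ^ ((ε-1)/2) :=
    Real.rpow_le_rpow_of_exponent_le hs₀R (by linarith)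
  by_cases hcase : s₀ < n
  · -- small s₀
    have hsle : (s₀:ℝ) ≤ (n:ℝ) := by exact_mod_cast (le_of_lt hcase)
    have hbase : (n:ℝ) ^ ((ε-1)/2) ≤ (s₀:ℝ) ^ ((ε-1)/2) := by
      have h1 : (s₀:ℝ) ^ ((1-ε)/2) ≤ (n:ℝ) ^ ((1-ε)/2) :=
        Real.rpow_le_rpow (le_of_lt hs₀pos) hsle (by linarith)
      have h2 : (n:ℝ) ^ ((ε-1)/2) = ((n:ℝ) ^ ((1-ε)/2))⁻¹ := by
        rw [← Real.rpow_neg (le_of_lt hn0)]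
        rw [show -((1-ε)/2) = (ε-1)/2 by ring]
      have h3 : (s₀:ℝ) ^ ((ε-1)/2) = ((s₀:ℝ) ^ ((1-ε)/2))⁻¹ := by
        rw [← Real.rpow_neg (le_of_lt hs₀pos)]
        rw [show -((1-ε)/2) = (ε-1)/2 by ring]
      rw [h2, h3]
      exact inv_anti₀ (Real.rpow_pos_of_pos hs₀pos _) h1
    have hkey : 2*M ≤ c * (s₀:ℝ) ^ ((ε-1)/2) := by
      have h1 : 2*(M+1) * (n:ℝ)^((1-ε)/2) * (n:ℝ)^((ε-1)/2) = 2*(M+1) := by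
        rw [mul_assoc, ← Real.rpow_add hn0,
          show (1-ε)/2 + (ε-1)/2 = 0 by ring, Real.rpow_zero, mul_one]
      have h2 : 2*(M+1) * (n:ℝ)^((1-ε)/2) ≤ c := by
        rw [hcdef]
        nlinarith
      calc 2*M ≤ 2*(M+1) := by linarith
        _ = 2*(M+1) * (n:ℝ)^((1-ε)/2) * (n:ℝ)^((ε-1)/2) := h1.symm
        _ ≤ c * (n:ℝ)^((ε-1)/2) := by
            apply mul_le_mul_of_nonneg_right h2 (le_of_lt (Real.rpow_pos_of_pos hn0 _))
        _ ≤ c * (s₀:ℝ)^((ε-1)/2) := by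
            apply mul_le_mul_of_nonneg_left hbase (le_of_lt hcpos)
    calc |∫ u, f u ∂μK - ∫ u, f u ∂μL| ≤ |∫ u, f u ∂μK| + |∫ u, f u ∂μL| := abs_sub _ _
      _ ≤ bf * M + bf * M := add_le_add hfK hfL
      _ ≤ 2*M := by nlinarith
      _ ≤ c * (s₀:ℝ) ^ ((ε-1)/2) := hkey
  · -- main case : s₀ ≥ n
    push_neg at hcase
    set s : ℕ := s₀ / n with hsdef
    have hnpos : 0 < n := by omega
    have hs1 : 1 ≤ s := (Nat.one_le_div_iff hnpos).2 hcase
    have hns : n * s ≤ s₀ := by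
      rw [hsdef, mul_comm]
      exact Nat.div_mul_le_self s₀ n
    have hs₀2ns : (s₀ : ℕ) ≤ 2*(n*s) := by
      have h1 : n * s + s₀ % n = s₀ := by
        rw [hsdef]; exact Nat.div_add_mod s₀ n
      have h2 : s₀ % n < n := Nat.mod_lt s₀ hnpos
      have h3 : n ≤ n * s := Nat.le_mul_of_pos_right n (by omega)
      calc s₀ = n*s + s₀ % n := h1.symm
        _ ≤ n*s + n := by omega
        _ ≤ n*s + n*s := by omega
        _ = 2*(n*s) := by ring
    -- Lipschitz extension of f
    set F : En n → ℝ := fun z => if hz : z ∈ Sph n then f ⟨z, hz⟩ else 0 with hFdef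
    have hFlip : LipschitzOnWith Lf.toNNReal F (Sph n) := by
      rw [lipschitzOnWith_iff_dist_le_mul]
      intro x hx y hy
      have e1 : F x = f ⟨x, hx⟩ := dif_pos hx
      have e2 : F y = f ⟨y, hy⟩ := dif_pos hy
      rw [e1, e2, Real.dist_eq, Real.coe_toNNReal _ hLf0]
      have := hLip ⟨x, hx⟩ ⟨y, hy⟩
      rwa [Subtype.dist_eq] at this
    obtain ⟨g, hglip, hgeq⟩ := hFlip.extend_real
    have hgf : ∀ u : Sph n, g (u : En n) = f u := by
      intro u
      have h1 : F (u : En n) = g (u : En n) := hgeq u.2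
      rw [← h1, hFdef]
      simp only [dif_pos u.2]
    have hgLip : ∀ x y : En n, |g x - g y| ≤ Lf * ‖x - y‖ := by
      intro x y
      have h1 := hglip.dist_le_mul x y
      rwa [Real.dist_eq, Real.coe_toNNReal _ hLf0, dist_eq_norm] at h1
    -- definitions
    set KS := Fintype.piFinset (fun _ : Fin n => Finset.range (s+1)) with hKSdef
    set Bf : Sph n → ℝ := fun u => ∑ k ∈ KS,
      g (nd n s k) * ∏ j, bern s (k j) (((u : En n) j + 1)/2) with hBfdef
    -- approximation on the sphere
    have happrox : ∀ u : Sph n, |f u - Bf u| ≤ Lf * Real.sqrt ((n:ℝ)/s) := by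
      intro u
      have hxc : ∀ j, |(u : En n) j| ≤ 1 := by
        intro j
        have h1 := abs_coord_le (u : En n) j
        have h2 : ‖(u : En n)‖ = 1 := by
          have := u.2
          rwa [mem_sphere_zero_iff_norm] at this
        rwa [h2] at h1
      have h := bernstein_multi_approx hLf0 hgLip s hs1 hxc
      rw [hgf u] at h
      exact h
    -- coefficients
    have hcoex : ∀ a : ℕ, ∃ co : ℕ → ℝ, a ≤ s → ∀ y : ℝ,
        bern s a ((y+1)/2) = ∑ i ∈ Finset.range (s+1), co i * y^i := by
      intro a
      by_cases ha : a ≤ s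
      · obtain ⟨co, hco⟩ := bern_coeff s a ha
        exact ⟨co, fun _ => hco⟩
      · exact ⟨fun _ => 0, fun h => absurd h ha⟩
    choose co hco using hcoex
    -- expansion of Bf into monomials
    have hBf_eq : ∀ u : Sph n, Bf u
        = ∑ k ∈ KS, ∑ i ∈ KS, (g (nd n s k) * ∏ j, co (k j) (i j)) *
            ∏ j, ((u : En n) j)^(i j) := by
      intro u
      rw [hBfdef]
      apply Finset.sum_congr rfl
      intro k hk
      have hkle : ∀ j, k j ≤ s := by
        intro j
        have h1 := (Fintype.mem_piFinset.1 hk) j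
        rw [Finset.mem_range] at h1
        omega
      have e1 : ∏ j, bern s (k j) (((u : En n) j + 1)/2)
          = ∏ j, ∑ i ∈ Finset.range (s+1), co (k j) i * ((u : En n) j)^i := by
        apply Finset.prod_congr rfl
        intro j _
        exact hco (k j) (hkle j) ((u : En n) j)
      rw [e1, Finset.prod_univ_sum, Finset.mul_sum]
      apply Finset.sum_congr rfl
      intro i _
      rw [Finset.prod_mul_distrib, ← mul_assoc]
    -- integral of Bf via moments
    have hBint : ∀ (μ : Measure (Sph n)), IsFiniteMeasure μ → Integrable Bf μ := by
      intro μ hfin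
      haveI := hfin
      have h1 : Integrable (fun u : Sph n => ∑ k ∈ KS, ∑ i ∈ KS,
          (g (nd n s k) * ∏ j, co (k j) (i j)) * ∏ j, ((u : En n) j)^(i j)) μ := by
        apply integrable_finset_sum
        intro k _
        apply integrable_finset_sum
        intro i _
        exact (integrable_mono i).const_mul _
      exact h1.congr (Filter.Eventually.of_forall fun u => (hBf_eq u).symm)
    have hI : ∀ (μ : Measure (Sph n)), IsFiniteMeasure μ → ∫ u, Bf u ∂μ
        = ∑ k ∈ KS, ∑ i ∈ KS, (g (nd n s k) * ∏ j, co (k j) (i j)) * sphMoment μ i := by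
      intro μ hfin
      haveI := hfin
      have h0 : ∫ u, Bf u ∂μ = ∫ u, ∑ k ∈ KS, ∑ i ∈ KS,
          (g (nd n s k) * ∏ j, co (k j) (i j)) * ∏ j, ((u : En n) j)^(i j) ∂μ :=
        integral_congr_ae (Filter.Eventually.of_forall fun u => hBf_eq u)
      rw [h0, integral_finset_sum _ (fun k _ => by
        apply integrable_finset_sum
        intro i _
        exact (integrable_mono i).const_mul _)]
      apply Finset.sum_congr rfl
      intro k _
      rw [integral_finset_sum _ (fun i _ => (integrable_mono i).const_mul _)]
      apply Finset.sum_congr rfl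
      intro i _
      rw [MeasureTheory.integral_const_mul]
      rfl
    have hmatch : ∫ u, Bf u ∂μK = ∫ u, Bf u ∂μL := by
      rw [hI μK hfinK, hI μL hfinL]
      apply Finset.sum_congr rfl
      intro k _
      apply Finset.sum_congr rfl
      intro i hi
      congr 1
      apply hmom
      have hile : ∀ j, i j ≤ s := by
        intro j
        have h1 := (Fintype.mem_piFinset.1 hi) j
        rw [Finset.mem_range] at h1
        omega
      calc ∑ j, i j ≤ ∑ _j : Fin n, s := Finset.sum_le_sum (fun j _ => hile j)
        _ = n * s := by rw [Finset.sum_const, Finset.card_univ, Fintype.card_fin, smul_eq_mul]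
        _ ≤ s₀ := hns
    -- the decomposition
    set D : ℝ := Lf * Real.sqrt ((n:ℝ)/s) with hDdef
    have hD0 : 0 ≤ D := mul_nonneg hLf0 (Real.sqrt_nonneg _)
    have hfBcont : ∀ u : Sph n, |f u - Bf u| ≤ D := happrox
    have hfBK : |∫ u, (f u - Bf u) ∂μK| ≤ D * M :=
      hintb μK hfinK hmK _ D hD0 hfBcont
    have hfBL : |∫ u, (f u - Bf u) ∂μL| ≤ D * M :=
      hintb μL hfinL hmL _ D hD0 hfBcont
    have hsplit : ∫ u, f u ∂μK - ∫ u, f u ∂μL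
        = (∫ u, (f u - Bf u) ∂μK) - (∫ u, (f u - Bf u) ∂μL) := by
      rw [integral_sub hfintK (hBint μK hfinK), integral_sub hfintL (hBint μL hfinL), hmatch]
      ring
    -- numeric estimates
    have hsR : (1:ℝ) ≤ (s:ℝ) := by exact_mod_cast hs1
    have hsRpos : (0:ℝ) < (s:ℝ) := by linarith
    have hratio : (n:ℝ)/s ≤ 4*(n:ℝ)^2/s₀ := by
      have h1 : (s₀:ℝ) ≤ 2*((n:ℝ)*(s:ℝ)) := by exact_mod_cast hs₀2ns
      rw [div_le_div_iff₀ hsRpos hs₀pos]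
      nlinarith [mul_le_mul_of_nonneg_left h1 (le_of_lt hn0)]
    have hsqrt : Real.sqrt ((n:ℝ)/s) ≤ 2*(n:ℝ) * (s₀:ℝ)^(-(1:ℝ)/2) := by
      have h1 : Real.sqrt ((n:ℝ)/s) ≤ Real.sqrt (4*(n:ℝ)^2/s₀) := Real.sqrt_le_sqrt hratio
      have h2 : Real.sqrt (4*(n:ℝ)^2/s₀) = 2*(n:ℝ) / Real.sqrt s₀ := by
        rw [Real.sqrt_div (by positivity) ((s₀:ℝ))]
        congr 1
        rw [show 4*(n:ℝ)^2 = (2*(n:ℝ))^2 by ring, Real.sqrt_sq (by linarith)]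
      have h3 : (s₀:ℝ)^(-(1:ℝ)/2) = 1 / Real.sqrt s₀ := by
        rw [show -(1:ℝ)/2 = -(1/2) by ring, Real.rpow_neg (le_of_lt hs₀pos),
          ← Real.sqrt_eq_rpow, one_div]
      rw [h3]
      calc Real.sqrt ((n:ℝ)/s) ≤ Real.sqrt (4*(n:ℝ)^2/s₀) := h1
        _ = 2*(n:ℝ) * (1/Real.sqrt s₀) := by rw [h2]; ring
    calc |∫ u, f u ∂μK - ∫ u, f u ∂μL|
        = |(∫ u, (f u - Bf u) ∂μK) - (∫ u, (f u - Bf u) ∂μL)| := by rw [hsplit]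
      _ ≤ |∫ u, (f u - Bf u) ∂μK| + |∫ u, (f u - Bf u) ∂μL| := abs_sub _ _
      _ ≤ D*M + D*M := add_le_add hfBK hfBL
      _ = 2*M*D := by ring
      _ ≤ 2*M*(Real.sqrt ((n:ℝ)/s)) := by
          apply mul_le_mul_of_nonneg_left _ (by linarith)
          rw [hDdef]
          nlinarith [Real.sqrt_nonneg ((n:ℝ)/s)]
      _ ≤ 2*M*(2*(n:ℝ)*(s₀:ℝ)^(-(1:ℝ)/2)) := by
          apply mul_le_mul_of_nonneg_left hsqrt (by linarith)
      _ = (4*M*(n:ℝ)) * (s₀:ℝ)^(-(1:ℝ)/2) := by ring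
      _ ≤ c * (s₀:ℝ)^((ε-1)/2) := by
          have h1 : 4*M*(n:ℝ) ≤ c := by
            rw [hcdef]
            nlinarith
          have h2 : (0:ℝ) ≤ (s₀:ℝ)^(-(1:ℝ)/2) := le_of_lt (Real.rpow_pos_of_pos hs₀pos _)
          calc (4*M*(n:ℝ)) * (s₀:ℝ)^(-(1:ℝ)/2) ≤ c * (s₀:ℝ)^(-(1:ℝ)/2) :=
              mul_le_mul_of_nonneg_right h1 h2
            _ ≤ c * (s₀:ℝ)^((ε-1)/2) := mul_le_mul_of_nonneg_left hexpmono (le_of_lt hcpos)
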